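/- Let d ≥ 4 and s = (1, q_1, …, q_{d−1}) with 1 > q_1 > q_2 > … > q_{d−1} > 0, and let T be the d×d matrix whose column 0 equals (1−q_1, q_1−q_2, …, q_{d−2}−q_{d−1}, q_{d−1})^T and whose column j, for 1 ≤ j ≤ d−1, is the standard basis vector e_{j−1}. Then for every probability vector p whose ratios p_i/s_i are pairwise distinct, the vector T p is not an extreme point of p^TP. -/

import Mathlib

/-- The set of thermal processes. -/
def TP (d : ℕ) (s : Fin d → ℝ) : Set (Matrix (Fin d) (Fin d) ℝ) :=
  {T | (∀ i j, 0 ≤ T i j) ∧ (∀ j, ∑ i, T i j = 1) ∧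
    T.mulVec (fun i => s i / ∑ k, s k) = (fun i => s i / ∑ k, s k)}

/-- A probability vector. -/
def ProbVec (d : ℕ) (p : Fin d → ℝ) : Prop := (∀ i, 0 ≤ p i) ∧ ∑ i, p i = 1

/-- `p^TP`, the set of states achievable from `p` by thermal processes. -/
def achievable (d : ℕ) (s p : Fin d → ℝ) : Set (Fin d → ℝ) :=
  (fun T : Matrix (Fin d) (Fin d) ℝ => T.mulVec p) '' TP d s

/-- The non-biplanar matrix `T`: column `0` is `(s₀−s₁, s₁−s₂, …, s_{d−2}−s_{d−1},
s_{d−1})ᵀ` and column `j`, for `j ≥ 1`, is the standard basis vector `e_{j−1}`. -/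
def Tnb (d : ℕ) (s : Fin d → ℝ) : Matrix (Fin d) (Fin d) ℝ :=
  Matrix.of fun i j =>
    if (j : ℕ) = 0 then
      (if h : (i : ℕ) + 1 < d then s i - s ⟨(i : ℕ) + 1, h⟩ else s i)
    else if (i : ℕ) + 1 = (j : ℕ) then 1 else 0

open Matrix Finset

lemma vmv_mulVec {d : ℕ} (u v p : Fin d → ℝ) :
    (Matrix.vecMulVec u v).mulVec p = (v ⬝ᵥ p) • u := by
  funext i
  simp only [Matrix.mulVec, Matrix.vecMulVec, dotProduct, Pi.smul_apply,
    smul_eq_mul, Matrix.of_apply]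
  rw [Finset.sum_mul]
  exact Finset.sum_congr rfl fun j _ => by ring

lemma sum_indicator {d : ℕ} (a : Fin d) :
    ∑ i : Fin d, (if i = a then (1:ℝ) else 0) = 1 := by
  simp

lemma Tnb_nonneg {d : ℕ} (s : Fin d → ℝ) (hanti : StrictAnti s) (hpos : ∀ i, 0 < s i)
    (i j : Fin d) : 0 ≤ Tnb d s i j := by
  unfold Tnb
  simp only [Matrix.of_apply]
  split
  · split
    · rename_i h
      have : s ⟨(i:ℕ)+1, h⟩ ≤ s i := by
        apply le_of_lt; apply hanti; exact Fin.mk_lt_mk.mpr (by omega) |>.trans_le (le_refl _)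
      linarith
    · exact (hpos i).le
  · split <;> norm_num

lemma Tnb_colsum {d : ℕ} (hd : 0 < d) (s : Fin d → ℝ) (hs0 : s ⟨0, hd⟩ = 1)
    (j : Fin d) : ∑ i, Tnb d s i j = 1 := by
  by_cases hj : (j : ℕ) = 0
  · -- telescoping
    set S : ℕ → ℝ := fun n => if h : n < d then s ⟨n, h⟩ else 0 with hS
    have key : ∀ i : Fin d, Tnb d s i j = S (i : ℕ) - S ((i : ℕ) + 1) := by
      intro i
      unfold Tnb
      simp only [Matrix.of_apply, hj, if_pos]
      by_cases h : (i : ℕ) + 1 < d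
      · rw [dif_pos h, hS]; simp [i.isLt, h]
      · rw [dif_neg h, hS]; simp [i.isLt, h]
    calc ∑ i, Tnb d s i j = ∑ i : Fin d, (S (i:ℕ) - S ((i:ℕ)+1)) :=
          Finset.sum_congr rfl fun i _ => key i
      _ = ∑ i ∈ Finset.range d, (S i - S (i+1)) := by
          rw [Fin.sum_univ_eq_sum_range (fun n => S n - S (n+1))]
      _ = S 0 - S d := Finset.sum_range_sub' S d
      _ = 1 := by rw [hS]; simp [hd, hs0]
  · -- standard basis column
    have hj1 : 1 ≤ (j : ℕ) := by omega
    have hjd : (j : ℕ) - 1 < d := by omega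
    have key : ∀ i : Fin d, Tnb d s i j = if i = ⟨(j:ℕ)-1, hjd⟩ then 1 else 0 := by
      intro i
      unfold Tnb
      simp only [Matrix.of_apply, if_neg hj]
      congr 1
      simp only [eq_iff_iff, Fin.ext_iff]
      omega
    rw [Finset.sum_congr rfl fun i _ => key i]
    simp

lemma Tnb_mulVec_s {d : ℕ} (hd : 0 < d) (s : Fin d → ℝ) (hs0 : s ⟨0, hd⟩ = 1) :
    (Tnb d s).mulVec s = s := by
  funext i
  have hz : (⟨0, hd⟩ : Fin d) ∈ (Finset.univ : Finset (Fin d)) := Finset.mem_univ _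
  rw [Matrix.mulVec, dotProduct, ← Finset.sum_erase_add _ _ hz]
  have col0 : Tnb d s i ⟨0, hd⟩ * s ⟨0, hd⟩ =
      if h : (i : ℕ) + 1 < d then s i - s ⟨(i:ℕ)+1, h⟩ else s i := by
    unfold Tnb; simp [hs0]
  have rest : ∑ j ∈ Finset.univ.erase ⟨0, hd⟩, Tnb d s i j * s j =
      if h : (i : ℕ) + 1 < d then s ⟨(i:ℕ)+1, h⟩ else 0 := by
    by_cases h : (i : ℕ) + 1 < d
    · rw [dif_pos h]
      have step : ∑ j ∈ Finset.univ.erase ⟨0, hd⟩, Tnb d s i j * s j =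
          Tnb d s i ⟨(i:ℕ)+1, h⟩ * s ⟨(i:ℕ)+1, h⟩ := by
        refine Finset.sum_eq_single_of_mem (⟨(i:ℕ)+1, h⟩ : Fin d) ?_ ?_
        · exact Finset.mem_erase.mpr ⟨by simp [Fin.ext_iff], Finset.mem_univ _⟩
        · intro j hjmem hjne
          have hj0 : (j : ℕ) ≠ 0 := by
            have := (Finset.mem_erase.mp hjmem).1
            simpa [Fin.ext_iff] using this
          have hne : (i : ℕ) + 1 ≠ (j : ℕ) := by
            intro hcon; exact hjne (by simp [Fin.ext_iff, ← hcon])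
          unfold Tnb; simp [hj0, hne]
      rw [step]
      have : Tnb d s i ⟨(i:ℕ)+1, h⟩ = 1 := by unfold Tnb; simp
      rw [this, one_mul]
    · rw [dif_neg h]
      apply Finset.sum_eq_zero
      intro j hjmem
      have hj0 : (j : ℕ) ≠ 0 := by
        have := (Finset.mem_erase.mp hjmem).1
        simpa [Fin.ext_iff] using this
      have hne : (i : ℕ) + 1 ≠ (j : ℕ) := by have := j.isLt; omega
      unfold Tnb; simp [hj0, hne]
  rw [col0, rest]
  by_cases h : (i : ℕ) + 1 < d <;> simp [h]

/-- perturbation direction vectors -/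
def pU {d : ℕ} (a' b' : Fin d) : Fin d → ℝ :=
  fun i => (if i = a' then 1 else 0) - (if i = b' then 1 else 0)

def pV {d : ℕ} (s : Fin d → ℝ) (z a : Fin d) : Fin d → ℝ :=
  fun j => (if j = z then s a else 0) - (if j = a then 1 else 0)

def Mpert {d : ℕ} (s : Fin d → ℝ) (z a a' b' : Fin d) (t : ℝ) :
    Matrix (Fin d) (Fin d) ℝ :=
  Tnb d s + t • Matrix.vecMulVec (pU a' b') (pV s z a)

lemma Mpert_mulVec {d : ℕ} (s : Fin d → ℝ) (z a a' b' : Fin d) (t : ℝ)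
    (w : Fin d → ℝ) :
    (Mpert s z a a' b' t).mulVec w =
      (Tnb d s).mulVec w + (t * (pV s z a ⬝ᵥ w)) • pU a' b' := by
  rw [Mpert, Matrix.add_mulVec, Matrix.smul_mulVec, vmv_mulVec]
  rw [smul_smul]

lemma pV_dot {d : ℕ} (s : Fin d → ℝ) (z a : Fin d) (hza : z ≠ a) (w : Fin d → ℝ) :
    pV s z a ⬝ᵥ w = s a * w z - w a := by
  unfold pV dotProduct
  have : ∀ j : Fin d, ((if j = z then s a else 0) - (if j = a then 1 else 0)) * w j
      = (if j = z then s a * w z else 0) - (if j = a then w a else 0) := by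
    intro j
    by_cases h1 : j = z <;> by_cases h2 : j = a <;>
      simp [h1, h2, hza, Ne.symm hza]
  rw [Finset.sum_congr rfl fun j _ => this j, Finset.sum_sub_distrib]
  simp

lemma Mpert_mem {d : ℕ} (hd : 0 < d) (s : Fin d → ℝ) (hs0 : s ⟨0, hd⟩ = 1)
    (hanti : StrictAnti s) (hpos : ∀ i, 0 < s i)
    (a a' b' : Fin d) (ha' : (a' : ℕ) + 1 = (a : ℕ)) (hb' : (b' : ℕ) + 1 < d)
    (hab' : a' ≠ b') (hba : ((b' : ℕ) + 1 : ℕ) ≠ (a : ℕ))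
    (t : ℝ) (ht0 : 0 ≤ t) (ht1 : t ≤ 1)
    (ht2 : t * s a ≤ s b' - s ⟨(b' : ℕ) + 1, hb'⟩) :
    Mpert s ⟨0, hd⟩ a a' b' t ∈ TP d s := by
  have ha0 : (a : ℕ) ≠ 0 := by omega
  have hzb' : (⟨0, hd⟩ : Fin d) ≠ b' → True := fun _ => trivial
  refine ⟨?_, ?_, ?_⟩
  · -- nonnegativity
    intro i j
    show 0 ≤ Tnb d s i j + t * (Matrix.vecMulVec (pU a' b') (pV s ⟨0, hd⟩ a) i j)
    rw [Matrix.vecMulVec_apply]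
    have htnb := Tnb_nonneg s hanti hpos i j
    have haz : a ≠ (⟨0,hd⟩ : Fin d) := by simp [Fin.ext_iff]; omega
    by_cases hja : j = a
    · -- column a
      have hTj : Tnb d s i j = if (i : ℕ) + 1 = (a : ℕ) then 1 else 0 := by
        unfold Tnb; simp [hja, ha0]
      have hVa : pV s ⟨0,hd⟩ a j = -1 := by unfold pV; simp [hja, haz]
      by_cases hia : i = a'
      · have hU : pU a' b' i = 1 := by unfold pU; simp [hia, hab']
        rw [hU, hVa, hTj, if_pos (by rw [hia]; exact ha')]
        linarith
      · by_cases hib : i = b'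
        · have hU : pU a' b' i = -1 := by unfold pU; simp [hib, Ne.symm hab']
          rw [hU, hVa, hTj, if_neg (by rw [hib]; exact hba)]
          linarith
        · have hU : pU a' b' i = 0 := by unfold pU; simp [hia, hib]
          rw [hU]; linarith
    · by_cases hjz : j = (⟨0, hd⟩ : Fin d)
      · -- column 0
        have hVz : pV s ⟨0,hd⟩ a j = s a := by
          unfold pV; simp [hjz, Ne.symm haz]
        rw [hVz]
        by_cases hia : i = a'
        · have hU : pU a' b' i = 1 := by unfold pU; simp [hia, hab']
          rw [hU]
          nlinarith [hpos a, htnb]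
        · by_cases hib : i = b'
          · have hU : pU a' b' i = -1 := by unfold pU; simp [hib, Ne.symm hab']
            rw [hU]
            have hTb : Tnb d s i j = s b' - s ⟨(b':ℕ)+1, hb'⟩ := by
              unfold Tnb
              simp only [Matrix.of_apply, hjz, hib]
              simp [hb']
            rw [hTb]; linarith
          · have hU : pU a' b' i = 0 := by unfold pU; simp [hia, hib]
            rw [hU]; linarith
      · -- other columns: pV = 0
        have : pV s ⟨0,hd⟩ a j = 0 := by unfold pV; simp [hja, hjz]
        rw [this]; simpa using htnb
  · -- column sums
    intro j
    show ∑ i, (Tnb d s i j + t * (Matrix.vecMulVec (pU a' b') (pV s ⟨0, hd⟩ a) i j)) = 1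
    rw [Finset.sum_add_distrib, Tnb_colsum hd s hs0 j]
    have : ∑ i, t * (Matrix.vecMulVec (pU a' b') (pV s ⟨0, hd⟩ a) i j) = 0 := by
      simp only [Matrix.vecMulVec_apply]
      have : ∑ i, t * (pU a' b' i * pV s ⟨0,hd⟩ a j)
          = t * ((∑ i, pU a' b' i) * pV s ⟨0,hd⟩ a j) := by
        rw [Finset.sum_mul, Finset.mul_sum]
      rw [this]
      have hsum : ∑ i, pU a' b' i = 0 := by
        unfold pU; rw [Finset.sum_sub_distrib]; simp
      rw [hsum]; ring
    rw [this]; ring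
  · -- Gibbs preservation
    have hZ : (fun i => s i / ∑ k, s k) = (∑ k, s k)⁻¹ • s := by
      funext i; simp [div_eq_inv_mul]
    rw [hZ, Matrix.mulVec_smul, Mpert_mulVec, Tnb_mulVec_s hd s hs0]
    have hza : (⟨0,hd⟩ : Fin d) ≠ a := by simp [Fin.ext_iff]; omega
    rw [pV_dot s _ _ hza s, hs0]
    simp

lemma pU_swap {d : ℕ} (a' b' : Fin d) : pU b' a' = -pU a' b' := by
  funext i; simp only [Pi.neg_apply]; unfold pU; ring

lemma pU_ne_zero {d : ℕ} (a' b' : Fin d) (h : a' ≠ b') : pU a' b' a' = 1 := by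
  unfold pU; simp [h]

/-- for `d ≥ 4` and `s = (1, q₁, …, q_{d−1})` with
`1 > q₁ > … > q_{d−1} > 0`, and for every probability vector `p` with pairwise
distinct ratios `p i / s i`, the vector `Tnb d s · p` is not an extreme point of
`p^TP`. -/
theorem stmt19 (d : ℕ) (hd : 4 ≤ d) (s : Fin d → ℝ)
    (hs0 : s ⟨0, by omega⟩ = 1) (hanti : StrictAnti s) (hpos : ∀ i, 0 < s i)
    (p : Fin d → ℝ) (hp : ProbVec d p)
    (hdist : ∀ i j : Fin d, i ≠ j → p i / s i ≠ p j / s j) :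
    (Tnb d s).mulVec p ∉ Set.extremePoints ℝ (achievable d s p) := by
  have hd0 : 0 < d := by omega
  set z : Fin d := ⟨0, hd0⟩ with hz
  have hs0' : s z = 1 := hs0
  set c : Fin d → ℝ := fun j => s j * p z - p j with hc
  have hcne : ∀ j : Fin d, (j : ℕ) ≠ 0 → c j ≠ 0 := by
    intro j hj hcon
    have hjz : z ≠ j := by simp [hz, Fin.ext_iff]; omega
    apply hdist z j hjz
    rw [hs0', div_one]
    have := hpos j
    simp only [hc] at hcon
    field_simp
    linarith [hcon]
  -- pick a b with same-sign c
  have hpick : ∃ a b : Fin d, 1 ≤ (a : ℕ) ∧ 1 ≤ (b : ℕ) ∧ (a : ℕ) ≠ (b : ℕ) ∧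
      0 < c a * c b := by
    have h1 : (1 : ℕ) < d := by omega
    have h2 : (2 : ℕ) < d := by omega
    have h3 : (3 : ℕ) < d := by omega
    set j1 : Fin d := ⟨1, h1⟩
    set j2 : Fin d := ⟨2, h2⟩
    set j3 : Fin d := ⟨3, h3⟩
    have n1 := hcne j1 (by simp [j1])
    have n2 := hcne j2 (by simp [j2])
    have n3 := hcne j3 (by simp [j3])
    by_cases h12 : 0 < c j1 * c j2
    · exact ⟨j1, j2, by simp [j1], by simp [j2], by simp [j1, j2], h12⟩
    · by_cases h13 : 0 < c j1 * c j3
      · exact ⟨j1, j3, by simp [j1], by simp [j3], by simp [j1, j3], h13⟩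
      · refine ⟨j2, j3, by simp [j2], by simp [j3], by simp [j2, j3], ?_⟩
        have h12' : c j1 * c j2 < 0 := lt_of_le_of_ne (not_lt.mp h12)
          (mul_ne_zero n1 n2)
        have h13' : c j1 * c j3 < 0 := lt_of_le_of_ne (not_lt.mp h13)
          (mul_ne_zero n1 n3)
        nlinarith [sq_nonneg (c j1)]
  obtain ⟨a, b, ha1, hb1, hab, hcc⟩ := hpick
  have hca : c a ≠ 0 := fun h => by rw [h, zero_mul] at hcc; exact lt_irrefl 0 hcc
  have hcb : c b ≠ 0 := fun h => by rw [h, mul_zero] at hcc; exact lt_irrefl 0 hcc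
  set a' : Fin d := ⟨(a : ℕ) - 1, by omega⟩ with ha'def
  set b' : Fin d := ⟨(b : ℕ) - 1, by omega⟩ with hb'def
  have ha' : (a' : ℕ) + 1 = (a : ℕ) := by simp [ha'def]; omega
  have hb' : (b' : ℕ) + 1 = (b : ℕ) := by simp [hb'def]; omega
  have ha'd : (a' : ℕ) + 1 < d := by omega
  have hb'd : (b' : ℕ) + 1 < d := by omega
  have hab' : a' ≠ b' := by simp [ha'def, hb'def, Fin.ext_iff]; omega
  have hsb'1 : s ⟨(b' : ℕ) + 1, hb'd⟩ = s b := by congr 1; exact Fin.ext hb'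
  have hsa'1 : s ⟨(a' : ℕ) + 1, ha'd⟩ = s a := by congr 1; exact Fin.ext ha'
  have hsba : s b < s b' := by
    apply hanti; rw [Fin.lt_def]; omega
  have hsab : s a < s a' := by
    apply hanti; rw [Fin.lt_def]; omega
  set ea := |c a| with hea
  set eb := |c b| with heb
  have hea0 : 0 < ea := abs_pos.mpr hca
  have heb0 : 0 < eb := abs_pos.mpr hcb
  set B1 : ℝ := min 1 ((s b' - s b) / s a) with hB1
  set B2 : ℝ := min 1 ((s a' - s a) / s b) with hB2
  have hB1pos : 0 < B1 := lt_min one_pos (div_pos (by linarith) (hpos a))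
  have hB2pos : 0 < B2 := lt_min one_pos (div_pos (by linarith) (hpos b))
  set ε : ℝ := min (ea * B1) (eb * B2) with hε
  have hεpos : 0 < ε := lt_min (mul_pos hea0 hB1pos) (mul_pos heb0 hB2pos)
  set t : ℝ := ε / ea with htdef
  set t' : ℝ := ε / eb with ht'def
  have ht0 : 0 < t := div_pos hεpos hea0
  have ht'0 : 0 < t' := div_pos hεpos heb0
  have htB : t ≤ B1 := by
    rw [htdef, div_le_iff₀ hea0, mul_comm]
    exact le_trans (min_le_left _ _) (le_refl _)
  have ht'B : t' ≤ B2 := by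
    rw [ht'def, div_le_iff₀ heb0, mul_comm]
    exact le_trans (min_le_right _ _) (le_refl _)
  have ht1 : t ≤ 1 := le_trans htB (min_le_left _ _)
  have ht'1 : t' ≤ 1 := le_trans ht'B (min_le_left _ _)
  have ht2 : t * s a ≤ s b' - s b := by
    have h1 : B1 ≤ (s b' - s b) / s a := min_le_right _ _
    have := mul_le_mul_of_nonneg_right (le_trans htB h1) (hpos a).le
    rwa [div_mul_cancel₀ _ (hpos a).ne'] at this
  have ht'2 : t' * s b ≤ s a' - s a := by
    have h1 : B2 ≤ (s a' - s a) / s b := min_le_right _ _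
    have := mul_le_mul_of_nonneg_right (le_trans ht'B h1) (hpos b).le
    rwa [div_mul_cancel₀ _ (hpos b).ne'] at this
  -- key equality
  have hkey : t * c a = t' * c b := by
    rcases mul_pos_iff.mp hcc with ⟨hpa, hpb⟩ | ⟨hna, hnb⟩
    · rw [htdef, ht'def, hea, heb, abs_of_pos hpa, abs_of_pos hpb,
        div_mul_cancel₀ _ hca, div_mul_cancel₀ _ hcb]
    · rw [htdef, ht'def, hea, heb, abs_of_neg hna, abs_of_neg hnb,
        div_neg, div_neg, neg_mul, neg_mul, div_mul_cancel₀ _ hca, div_mul_cancel₀ _ hcb]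
  -- the two processes
  have hmem1 : Mpert s z a a' b' t ∈ TP d s := by
    apply Mpert_mem hd0 s hs0' hanti hpos a a' b' ha' hb'd hab' (by omega)
      t ht0.le ht1
    rw [hsb'1]; exact ht2
  have hmem2 : Mpert s z b b' a' t' ∈ TP d s := by
    apply Mpert_mem hd0 s hs0' hanti hpos b b' a' hb' ha'd (Ne.symm hab') (by omega)
      t' ht'0.le ht'1
    rw [hsa'1]; exact ht'2
  have hza : z ≠ a := by simp [hz, Fin.ext_iff]; omega
  have hzb : z ≠ b := by simp [hz, Fin.ext_iff]; omega
  set x := (Tnb d s).mulVec p with hx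
  set u := pU a' b' with hu
  set δ := t * c a with hδ
  have hδ0 : δ ≠ 0 := mul_ne_zero ht0.ne' hca
  have hx1 : (Mpert s z a a' b' t).mulVec p = x + δ • u := by
    rw [Mpert_mulVec, pV_dot s z a hza p, hx, hδ, hc, hu]
  have hcbv : t' * (s b * p z - p b) = δ := by rw [hkey]
  have hx2 : (Mpert s z b b' a' t').mulVec p = x - δ • u := by
    rw [Mpert_mulVec, pV_dot s z b hzb p, hcbv, hu, pU_swap, smul_neg, ← hx,
      sub_eq_add_neg]
  -- conclude
  intro hext
  rw [mem_extremePoints] at hext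
  obtain ⟨-, H⟩ := hext
  have h1mem : x + δ • u ∈ achievable d s p := ⟨_, hmem1, hx1⟩
  have h2mem : x - δ • u ∈ achievable d s p := ⟨_, hmem2, hx2⟩
  have hseg : x ∈ openSegment ℝ (x + δ • u) (x - δ • u) := by
    refine ⟨1/2, 1/2, by norm_num, by norm_num, by norm_num, ?_⟩
    module
  have := (H _ h1mem _ h2mem hseg).1
  have := congrFun this a'
  simp only [Pi.add_apply, Pi.smul_apply, smul_eq_mul] at this
  rw [hu, pU_ne_zero a' b' hab'] at this
  simp at this
  exact hδ0 this
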